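/- Let V : ℕ → ℤ[T,T⁻¹] satisfy the Jones recurrence V(m+2) = (T³ − T)·V(m+1) + T⁴·V(m) for all m. Suppose V(0) ≠ 0, the pair (V(0), V(1)) is critical (deg V(1) = 1 + deg V(0)), the sum of the leading coefficients of V(0) and V(1) is 0, and deg V(2) ≤ deg V(1). Then for every m ≥ 2 the pair (V(m), V(m+1)) is stable, and for every m ≥ 3, deg V(m) = deg V(1) + 3·m − 5. -/

import Mathlib

/-- The degree of a Laurent polynomial `f`, viewed as a finitely supported function
`ℤ → ℤ`: the maximum of its support in `WithBot ℤ` (so `jdeg 0 = ⊥`). -/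
noncomputable def jdeg (f : LaurentPolynomial ℤ) : WithBot ℤ :=
  f.coeff.support.max

/-- The leading coefficient of a Laurent polynomial: its coefficient at `jdeg f`
(for `f ≠ 0`; by convention `jcoeff 0 = 0`). -/
noncomputable def jcoeff (f : LaurentPolynomial ℤ) : ℤ :=
  f.coeff (WithBot.unbotD 0 (f.coeff.support.max))

namespace JAux
open LaurentPolynomial

open LaurentPolynomial

lemma jdeg_eq_bot {f : LaurentPolynomial ℤ} : jdeg f = ⊥ ↔ f = 0 := by
  rw [jdeg, Finset.max_eq_bot, Finsupp.support_eq_empty, AddMonoidAlgebra.coeff_eq_zero]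

lemma le_jdeg {f : LaurentPolynomial ℤ} {a : ℤ} (h : (f).coeff a ≠ 0) :
    (a : WithBot ℤ) ≤ jdeg f := Finset.le_max (Finsupp.mem_support_iff.2 h)

lemma jdeg_le {f : LaurentPolynomial ℤ} {M : WithBot ℤ}
    (h : ∀ a : ℤ, (f).coeff a ≠ 0 → (a : WithBot ℤ) ≤ M) : jdeg f ≤ M :=
  Finset.max_le fun a ha => h a (Finsupp.mem_support_iff.1 ha)

lemma coeff_eq_zero_of_lt {f : LaurentPolynomial ℤ} {a : ℤ} (h : jdeg f < (a : WithBot ℤ)) :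
    (f).coeff a = 0 := by
  by_contra hc
  exact absurd (le_jdeg hc) (not_le.2 h)

lemma coeff_T_mul (n : ℤ) (f : LaurentPolynomial ℤ) (y : ℤ) :
    (T n * f).coeff y = (f).coeff (-n + y) := by
  rw [T, AddMonoidAlgebra.coeff_single_mul_apply, one_mul]

lemma jdeg_T_mul (n : ℤ) (f : LaurentPolynomial ℤ) :
    jdeg (T n * f) = (n : WithBot ℤ) + jdeg f := by
  rcases eq_or_ne f 0 with rfl | hf
  · simp [jdeg_eq_bot.2 (mul_zero (T n))]
    rw [jdeg_eq_bot.2 rfl]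
    simp
  · apply le_antisymm
    · refine jdeg_le fun a ha => ?_
      rw [coeff_T_mul] at ha
      have h1 : ((-n + a : ℤ) : WithBot ℤ) ≤ jdeg f := le_jdeg ha
      calc (a : WithBot ℤ) = (n : WithBot ℤ) + ((-n + a : ℤ) : WithBot ℤ) := by
            push_cast; ring_nf
            rw [add_comm]
            norm_cast
            ring
        _ ≤ (n : WithBot ℤ) + jdeg f := add_le_add_right h1 _
    · have hne : ((f).coeff.support).Nonempty :=
        Finsupp.support_nonempty_iff.2 (mt AddMonoidAlgebra.coeff_eq_zero.1 hf)
      obtain ⟨d, hd⟩ := Finset.max_of_nonempty hne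
      have hdmem : d ∈ (f).coeff.support := Finset.mem_of_max hd
      have hfd : (f).coeff d ≠ 0 := Finsupp.mem_support_iff.1 hdmem
      have : (T n * f).coeff (n + d) ≠ 0 := by
        rw [coeff_T_mul]; simpa using hfd
      have h2 : ((n + d : ℤ) : WithBot ℤ) ≤ jdeg (T n * f) := le_jdeg this
      rw [jdeg] at *
      rw [hd]
      calc (n : WithBot ℤ) + (d : WithBot ℤ) = ((n + d : ℤ) : WithBot ℤ) := by push_cast; rfl
        _ ≤ _ := h2

lemma jdeg_add_le (f g : LaurentPolynomial ℤ) :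
    jdeg (f + g) ≤ max (jdeg f) (jdeg g) := by
  refine jdeg_le fun a ha => ?_
  have : (f + g).coeff a = (f).coeff a + (g).coeff a := rfl
  rw [this] at ha
  rcases ne_or_eq ((f).coeff a) 0 with h | h
  · exact le_max_of_le_left (le_jdeg h)
  · rw [h, zero_add] at ha
    exact le_max_of_le_right (le_jdeg ha)

lemma jdeg_add_eq_right {f g : LaurentPolynomial ℤ} (h : jdeg f < jdeg g) :
    jdeg (f + g) = jdeg g := by
  have hg : g ≠ 0 := by
    rintro rfl
    rw [show jdeg (0 : LaurentPolynomial ℤ) = ⊥ from jdeg_eq_bot.2 rfl] at h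
    exact not_lt_bot h
  apply le_antisymm
  · exact (jdeg_add_le f g).trans (by rw [max_eq_right h.le])
  · have hne : ((g).coeff.support).Nonempty := Finsupp.support_nonempty_iff.2 (mt AddMonoidAlgebra.coeff_eq_zero.1 hg)
    obtain ⟨d, hd⟩ := Finset.max_of_nonempty hne
    have hgd : (g).coeff d ≠ 0 := Finsupp.mem_support_iff.1 (Finset.mem_of_max hd)
    have hfd : (f).coeff d = 0 := by
      apply coeff_eq_zero_of_lt
      calc jdeg f < jdeg g := h
        _ = (d : WithBot ℤ) := hd
    have : (f + g).coeff d ≠ 0 := by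
      have : (f + g).coeff d = (f).coeff d + (g).coeff d := rfl
      rw [this, hfd, zero_add]; exact hgd
    have := le_jdeg this
    rw [jdeg, hd]
    exact this

lemma jdeg_neg (f : LaurentPolynomial ℤ) : jdeg (-f) = jdeg f := by
  rw [jdeg, jdeg]; congr 1; exact Finsupp.support_neg f.coeff

-- (T 3 - T 1) * f
lemma jdeg_key_le (f : LaurentPolynomial ℤ) :
    jdeg ((T 3 - T 1) * f) ≤ (3 : WithBot ℤ) + jdeg f := by
  have : (T 3 - T 1) * f = T 1 * (-f) + T 3 * f := by ring
  rw [this]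
  refine (jdeg_add_le _ _).trans ?_
  rw [jdeg_T_mul, jdeg_T_mul, jdeg_neg]
  apply max_le
  · exact add_le_add_left (by norm_num) _
  · rfl

lemma jdeg_key_eq {f : LaurentPolynomial ℤ} (hf : f ≠ 0) :
    jdeg ((T 3 - T 1) * f) = (3 : WithBot ℤ) + jdeg f := by
  have : (T 3 - T 1) * f = T 1 * (-f) + T 3 * f := by ring
  obtain ⟨d, hd⟩ : ∃ d : ℤ, jdeg f = (d : WithBot ℤ) := by
    cases hjd : jdeg f with
    | bot => exact absurd (jdeg_eq_bot.1 hjd) hf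
    | coe d => exact ⟨d, rfl⟩
  have hlt : jdeg (T 1 * (-f)) < jdeg (T 3 * f) := by
    rw [jdeg_T_mul, jdeg_T_mul, jdeg_neg, hd]
    norm_cast
    omega
  rw [this, jdeg_add_eq_right hlt, jdeg_T_mul]
  norm_cast

lemma wb_add_le {c : ℤ} {x : WithBot ℤ} (h : x ≤ (c : WithBot ℤ)) :
    (3 : WithBot ℤ) + x ≤ ((3 + c : ℤ) : WithBot ℤ) := by
  cases x with
  | bot => simp
  | coe e =>
    have h' : e ≤ c := by exact_mod_cast h
    have : (3 : WithBot ℤ) + (e : WithBot ℤ) = ((3 + e : ℤ) : WithBot ℤ) := by push_cast; rfl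
    rw [this]
    exact_mod_cast by omega

lemma wb_one_add_le {c : ℤ} {x : WithBot ℤ} (h : x ≤ (c : WithBot ℤ)) :
    (1 : WithBot ℤ) + x ≤ ((1 + c : ℤ) : WithBot ℤ) := by
  cases x with
  | bot => simp
  | coe e =>
    have h' : e ≤ c := by exact_mod_cast h
    have : (1 : WithBot ℤ) + (e : WithBot ℤ) = ((1 + e : ℤ) : WithBot ℤ) := by push_cast; rfl
    rw [this]
    exact_mod_cast by omega

lemma wb_four_add_lt {c : ℤ} {x : WithBot ℤ} (h : (1 : WithBot ℤ) + x < (c : WithBot ℤ)) :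
    (4 : WithBot ℤ) + x < ((3 + c : ℤ) : WithBot ℤ) := by
  cases x with
  | bot =>
    rw [WithBot.add_bot]
    exact WithBot.bot_lt_coe _
  | coe e =>
    have h1 : (1 : WithBot ℤ) + (e : WithBot ℤ) = ((1 + e : ℤ) : WithBot ℤ) := by push_cast; rfl
    rw [h1] at h
    have h' : 1 + e < c := by exact_mod_cast h
    have : (4 : WithBot ℤ) + (e : WithBot ℤ) = ((4 + e : ℤ) : WithBot ℤ) := by push_cast; rfl
    rw [this]
    exact_mod_cast by omega

end JAux

open JAux

open LaurentPolynomial in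
/-- **Proposition 3.4, Case 2b** (critical case, vanishing coefficient sum, degree
drop). If `V` satisfies the Jones recurrence, `V 0 ≠ 0`, the pair `(V 0, V 1)` is
critical, the sum of the leading coefficients of `V 0` and `V 1` is `0`, and
`deg V 2 ≤ deg V 1`, then every pair `(V m, V (m+1))` with `m ≥ 2` is stable and
`deg V m = deg V 1 + 3m − 5` for `m ≥ 3`. -/
theorem jones_critical_case_two_b (V : ℕ → LaurentPolynomial ℤ)
    (hV : ∀ m : ℕ, V (m + 2) = (T 3 - T 1) * V (m + 1) + T 4 * V m)
    (h0 : V 0 ≠ 0)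
    (hcrit : jdeg (V 1) = 1 + jdeg (V 0))
    (hC : jcoeff (V 0) + jcoeff (V 1) = 0)
    (h2 : jdeg (V 2) ≤ jdeg (V 1)) :
    (∀ m : ℕ, 2 ≤ m → 1 + jdeg (V m) < jdeg (V (m + 1))) ∧
    (∀ m : ℕ, 3 ≤ m → jdeg (V m) = jdeg (V 1) + ((3 * (m : ℤ) - 5 : ℤ) : WithBot ℤ)) := by 
  obtain ⟨a0, ha0⟩ : ∃ a0 : ℤ, jdeg (V 0) = (a0 : WithBot ℤ) := by
    cases hjd : jdeg (V 0) with
    | bot => exact absurd (jdeg_eq_bot.1 hjd) h0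
    | coe d => exact ⟨d, rfl⟩
  set d1 : ℤ := 1 + a0 with hd1def
  have hd1 : jdeg (V 1) = (d1 : WithBot ℤ) := by
    rw [hcrit, ha0, hd1def]; push_cast; rfl
  have h2' : jdeg (V 2) ≤ (d1 : WithBot ℤ) := hd1 ▸ h2
  have claim : ∀ k : ℕ, jdeg (V (k + 3)) = ((d1 + 4 + 3 * k : ℤ) : WithBot ℤ) ∧
      1 + jdeg (V (k + 2)) < ((d1 + 4 + 3 * k : ℤ) : WithBot ℤ) := by
    intro k
    induction k with
    | zero =>
      have e3 : V 3 = (T 3 - T 1) * V 2 + T 4 * V 1 := hV 1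
      have hT4 : jdeg (T 4 * V 1) = ((4 + d1 : ℤ) : WithBot ℤ) := by
        rw [jdeg_T_mul, hd1]; push_cast; rfl
      have hb : jdeg ((T 3 - T 1) * V 2) ≤ ((3 + d1 : ℤ) : WithBot ℤ) := by
        refine (jdeg_key_le _).trans ?_
        exact wb_add_le h2'
      have hlt : jdeg ((T 3 - T 1) * V 2) < jdeg (T 4 * V 1) := by
        refine hb.trans_lt ?_
        rw [hT4]; norm_cast; omega
      have hdeg3 : jdeg (V 3) = ((4 + d1 : ℤ) : WithBot ℤ) := by
        rw [e3, jdeg_add_eq_right hlt, hT4]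
      constructor
      · rw [show (0:ℕ)+3 = 3 from rfl, hdeg3]; norm_cast; omega
      · have : 1 + jdeg (V 2) ≤ ((1 + d1 : ℤ) : WithBot ℤ) := wb_one_add_le h2'
        refine this.trans_lt ?_
        norm_cast; omega
    | succ k ih =>
      have e4 : V (k + 4) = (T 3 - T 1) * V (k + 3) + T 4 * V (k + 2) := hV (k + 2)
      have hne : V (k + 3) ≠ 0 := by
        intro hz
        have hb := ih.1
        rw [hz, jdeg_eq_bot.2 rfl] at hb
        exact WithBot.bot_ne_coe hb
      have hA : jdeg ((T 3 - T 1) * V (k + 3)) = ((d1 + 4 + 3 * (k + 1 : ℕ) : ℤ) : WithBot ℤ) := by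
        rw [jdeg_key_eq hne, ih.1]
        have h3 : (3 : WithBot ℤ) + ((d1 + 4 + 3 * (k : ℤ) : ℤ) : WithBot ℤ)
            = ((3 + (d1 + 4 + 3 * (k : ℤ)) : ℤ) : WithBot ℤ) := by push_cast; rfl
        rw [h3]
        congr 1
        push_cast
        ring
      have hB : jdeg (T 4 * V (k + 2)) < ((d1 + 4 + 3 * (k + 1 : ℕ) : ℤ) : WithBot ℤ) := by
        rw [jdeg_T_mul]
        have := wb_four_add_lt ih.2
        refine this.trans_le ?_
        norm_cast
        push_cast
        omega
      have hlt : jdeg (T 4 * V (k + 2)) < jdeg ((T 3 - T 1) * V (k + 3)) := by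
        rw [hA]; exact hB
      have hdeg4 : jdeg (V (k + 4)) =
          ((d1 + 4 + 3 * (k + 1 : ℕ) : ℤ) : WithBot ℤ) := by
        rw [e4, add_comm ((T 3 - T 1) * V (k + 3)), jdeg_add_eq_right hlt, hA]
      refine ⟨hdeg4, ?_⟩
      rw [show k + 1 + 2 = k + 3 from rfl, ih.1]
      have : (1 : WithBot ℤ) + ((d1 + 4 + 3 * k : ℤ) : WithBot ℤ)
          = ((1 + (d1 + 4 + 3 * k) : ℤ) : WithBot ℤ) := by push_cast; rfl
      rw [this]
      norm_cast
      push_cast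
      omega
  constructor
  · intro m hm
    obtain ⟨k, rfl⟩ : ∃ k, m = k + 2 := ⟨m - 2, by omega⟩
    rw [show k + 2 + 1 = k + 3 from rfl, (claim k).1]
    exact (claim k).2
  · intro m hm
    obtain ⟨k, rfl⟩ : ∃ k, m = k + 3 := ⟨m - 3, by omega⟩
    rw [(claim k).1, hd1]
    have h4 : ((d1 : ℤ) : WithBot ℤ) + ((3 * ((k + 3 : ℕ) : ℤ) - 5 : ℤ) : WithBot ℤ)
        = ((d1 + (3 * ((k + 3 : ℕ) : ℤ) - 5) : ℤ) : WithBot ℤ) := by push_cast; rfl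
    rw [h4]
    congr 1
    push_cast
    ring
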